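/- Let 1 < n < ω. Every ω-resolvable topological space (X, T) admits an expansion U ⊇ T such that (X, U) is exactly n-resolvable. -/

import Mathlib

open Set TopologicalSpace

variable {X : Type*}

/-- The family `D : ι → Set X` witnesses `ι`-resolvability of the subspace `S` of `(X, T)`:
the `D i` are pairwise disjoint nonempty subsets of `S`, each dense in the subspace `S`
(equivalently `S ⊆ closure (D i)`). -/
def ResolvableFam (T : TopologicalSpace X) (S : Set X) (ι : Type*) : Prop :=
  ∃ D : ι → Set X, (∀ i, D i ⊆ S) ∧ (∀ i, (D i).Nonempty) ∧
    (∀ i, S ⊆ @closure X T (D i)) ∧ (Pairwise fun i j => Disjoint (D i) (D j))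

/-- A topology is quasi-regular if every nonempty open set contains the closure
of some nonempty open set. -/
def QuasiRegular (T : TopologicalSpace X) : Prop :=
  ∀ U : Set X, T.IsOpen U → U.Nonempty →
    ∃ V : Set X, T.IsOpen V ∧ V.Nonempty ∧ @closure X T V ⊆ U


/-- Expansion of a topology `U` by one additional set `S`. -/
def expandBy (U : TopologicalSpace X) (S : Set X) : TopologicalSpace X where
  IsOpen V := ∃ W₁ W₂, U.IsOpen W₁ ∧ U.IsOpen W₂ ∧ V = W₁ ∪ W₂ ∩ S
  isOpen_univ := ⟨univ, ∅, U.isOpen_univ, (@isOpen_empty X U), by simp⟩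
  isOpen_inter := by
    rintro V V' ⟨W₁, W₂, h1, h2, rfl⟩ ⟨V₁, V₂, g1, g2, rfl⟩
    refine ⟨W₁ ∩ V₁, (W₁ ∩ V₂) ∪ (W₂ ∩ V₁) ∪ (W₂ ∩ V₂), U.isOpen_inter _ _ h1 g1, ?_, ?_⟩
    · exact @IsOpen.union X _ _ U (@IsOpen.union X _ _ U (U.isOpen_inter _ _ h1 g2)
        (U.isOpen_inter _ _ h2 g1)) (U.isOpen_inter _ _ h2 g2)
    · ext x; simp only [mem_inter_iff, mem_union]; tauto
  isOpen_sUnion := by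
    intro 𝒮 h
    choose W₁ W₂ h1 h2 heq using h
    refine ⟨⋃ t : 𝒮, W₁ t t.2, ⋃ t : 𝒮, W₂ t t.2, @isOpen_iUnion X _ U _ fun t => h1 t t.2,
      @isOpen_iUnion X _ U _ fun t => h2 t t.2, ?_⟩
    ext x
    simp only [mem_sUnion, mem_union, mem_inter_iff, mem_iUnion]
    constructor
    · rintro ⟨t, ht, hx⟩
      rw [heq t ht] at hx
      rcases hx with h | h
      · exact Or.inl ⟨⟨t, ht⟩, h⟩
      · exact Or.inr ⟨⟨⟨t, ht⟩, h.1⟩, h.2⟩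
    · rintro (⟨⟨t, ht⟩, hx⟩ | ⟨⟨⟨t, ht⟩, hx⟩, hxS⟩)
      · exact ⟨t, ht, by rw [heq t ht]; exact Or.inl hx⟩
      · exact ⟨t, ht, by rw [heq t ht]; exact Or.inr ⟨hx, hxS⟩⟩

lemma expandBy_isOpen_of (U : TopologicalSpace X) (S : Set X) {V : Set X} (h : U.IsOpen V) :
    (expandBy U S).IsOpen V := ⟨V, ∅, h, (@isOpen_empty X U), by simp⟩

lemma expandBy_isOpen_self (U : TopologicalSpace X) (S : Set X) :
    (expandBy U S).IsOpen S := ⟨∅, univ, (@isOpen_empty X U), U.isOpen_univ, by simp⟩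


lemma meets_of_closure (U : TopologicalSpace X) {A : Set X}
    (h : (univ : Set X) ⊆ @closure X U A) {V : Set X} (hV : U.IsOpen V) (hne : V.Nonempty) :
    (V ∩ A).Nonempty := by
  letI := U
  obtain ⟨x, hx⟩ := hne
  exact mem_closure_iff.mp (h (mem_univ x)) V hV hx

lemma closure_univ_of_meets (U : TopologicalSpace X) {A : Set X}
    (h : ∀ V : Set X, U.IsOpen V → V.Nonempty → (V ∩ A).Nonempty) :
    (univ : Set X) ⊆ @closure X U A := by
  letI := U
  intro x _
  exact mem_closure_iff.mpr fun o ho hxo => h o ho ⟨x, hxo⟩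


theorem stmt8 [T : TopologicalSpace X] (n : ℕ) (hn : 1 < n)
    (hres : ResolvableFam T (univ : Set X) ℕ) :
    ∃ U : TopologicalSpace X, (∀ s, T.IsOpen s → U.IsOpen s) ∧
      ResolvableFam U (univ : Set X) (Fin n) ∧
      ¬ ResolvableFam U (univ : Set X) (Fin (n + 1)) := by
  classical
  obtain ⟨D, hDsub, hDne, hDcl, hDdisj⟩ := hres
  have hXne : Nonempty X := ⟨(hDne 0).choose⟩
  set P : Set (TopologicalSpace X) := {U | (∀ V, T.IsOpen V → U.IsOpen V) ∧
    ∀ (i : Fin n) (V : Set X), U.IsOpen V → V.Nonempty → (V ∩ D (i : ℕ)).Nonempty} with hP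
  set Pcal : Set (Set (Set X)) := (fun U : TopologicalSpace X => {V | U.IsOpen V}) '' P with hPcal
  have hTP : T ∈ P := ⟨fun _ h => h, fun i V hV hVne =>
    meets_of_closure T (by simpa using hDcl (i : ℕ)) hV hVne⟩
  -- Zorn
  have hchain : ∀ c ⊆ Pcal, IsChain (· ⊆ ·) c → c.Nonempty →
      ∃ ub ∈ Pcal, ∀ s ∈ c, s ⊆ ub := by
    intro c hc hch ⟨F₀, hF₀⟩
    set G : Set (Set X) := ⋃₀ c with hG
    set Ustar : TopologicalSpace X := generateFrom G with hUstar
    have hGopen : ∀ V ∈ G, Ustar.IsOpen V := fun V hV => GenerateOpen.basic V hV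
    have hfin : ∀ f : Set (Set X), f.Finite → f ⊆ G → ∃ F ∈ c, f ⊆ F := by
      intro f hf
      refine Set.Finite.induction_on (motive := fun s _ => s ⊆ G → ∃ F ∈ c, s ⊆ F) f hf (fun _ => ⟨F₀, hF₀, empty_subset _⟩) ?_
      rintro a s ha hfs ih hsub
      obtain ⟨F, hFc, hsF⟩ := ih fun x hx => hsub (mem_insert_of_mem _ hx)
      obtain ⟨Fa, hFac, haFa⟩ := hsub (mem_insert a s)
      rcases hch.total hFc hFac with h | h
      · exact ⟨Fa, hFac, insert_subset haFa (hsF.trans h)⟩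
      · exact ⟨F, hFc, insert_subset (h haFa) hsF⟩
    have hbasis := @isTopologicalBasis_of_subbasis X Ustar G rfl
    have hUstarP : Ustar ∈ P := by
      constructor
      · intro V hV
        obtain ⟨U₁, hU₁P, hU₁⟩ := hc hF₀
        apply hGopen
        exact mem_sUnion.mpr ⟨F₀, hF₀, by rw [← hU₁]; exact hU₁P.1 V hV⟩
      · intro i V hV ⟨x, hx⟩
        obtain ⟨b, hb, hxb, hbV⟩ :=
          @IsTopologicalBasis.exists_subset_of_mem_open X Ustar _ hbasis x V hx hV
        obtain ⟨f, ⟨hffin, hfG⟩, rfl⟩ := hb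
        obtain ⟨F, hFc, hfF⟩ := hfin f hffin hfG
        obtain ⟨UF, hUFP, hUF⟩ := hc hFc
        have hopen : UF.IsOpen (⋂₀ f) := by
          letI := UF
          exact hffin.isOpen_sInter fun s hs => by
            have : s ∈ F := hfF hs
            rw [← hUF] at this; exact this
        obtain ⟨y, hy⟩ := hUFP.2 i (⋂₀ f) hopen ⟨x, hxb⟩
        exact ⟨y, hbV hy.1, hy.2⟩
    exact ⟨{V | Ustar.IsOpen V}, ⟨Ustar, hUstarP, rfl⟩,
      fun F hFc V hVF => hGopen V (mem_sUnion.mpr ⟨F, hFc, hVF⟩)⟩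
  obtain ⟨M, _, hMmax⟩ := zorn_subset_nonempty Pcal hchain {V | T.IsOpen V} ⟨T, hTP, rfl⟩
  obtain ⟨U₀, hU₀P, hU₀M⟩ := hMmax.1
  have hU₀dense : ∀ (i : Fin n) (V : Set X), U₀.IsOpen V → V.Nonempty →
      (V ∩ D (i : ℕ)).Nonempty := hU₀P.2
  refine ⟨U₀, hU₀P.1, ?_, ?_⟩
  · refine ⟨fun i => D (i : ℕ), fun _ => subset_univ _, fun i => hDne _,
      fun i => closure_univ_of_meets U₀ (hU₀dense i), ?_⟩
    intro i j hij
    exact hDdisj (fun h => hij (Fin.val_injective h))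
  · rintro ⟨E, hEsub, hEne, hEcl, hEdisj⟩
    have hEdense : ∀ (j : Fin (n + 1)) (V : Set X), U₀.IsOpen V → V.Nonempty →
        (V ∩ E j).Nonempty := fun j V hV hVne =>
      meets_of_closure U₀ (by simpa using hEcl j) hV hVne
    -- the key open sets
    set O : Fin (n + 1) → Fin n → Set X :=
      fun j i => ⋃₀ {W | U₀.IsOpen W ∧ W ∩ D (i : ℕ) ⊆ E j} with hO
    have hOopen : ∀ j i, U₀.IsOpen (O j i) :=
      fun j i => U₀.isOpen_sUnion _ fun W hW => hW.1
    have hOsub : ∀ j i, O j i ∩ D (i : ℕ) ⊆ E j := by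
      rintro j i x ⟨hx, hxD⟩
      obtain ⟨W, hW, hxW⟩ := hx
      exact hW.2 ⟨hxW, hxD⟩
    have hOdisj : ∀ (i : Fin n) (j j' : Fin (n + 1)), j ≠ j' → O j i ∩ O j' i = ∅ := by
      intro i j j' hjj'
      by_contra h
      obtain ⟨y, hy⟩ := hU₀dense i _ (U₀.isOpen_inter _ _ (hOopen j i) (hOopen j' i))
        (nonempty_iff_ne_empty.mpr h)
      exact (hEdisj hjj').le_bot ⟨hOsub j i ⟨hy.1.1, hy.2⟩, hOsub j' i ⟨hy.1.2, hy.2⟩⟩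
    set B : Fin (n + 1) → Set X := fun j => ⋃ i : Fin n, O j i with hB
    have hBopen : ∀ j, U₀.IsOpen (B j) := fun j => @isOpen_iUnion X _ U₀ _ (hOopen j)
    set S : Fin (n + 1) → Set X := fun j => (E j)ᶜ ∪ B j with hS
    -- goodness
    have hgood : ∀ (j : Fin (n + 1)) (W : Set X), U₀.IsOpen W → (W ∩ S j).Nonempty →
        ∀ i : Fin n, ((W ∩ S j) ∩ D (i : ℕ)).Nonempty := by
      intro j W hW hne i
      by_cases hWB : (W ∩ B j).Nonempty
      · obtain ⟨y, hy⟩ := hU₀dense i _ (U₀.isOpen_inter _ _ hW (hBopen j)) hWB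
        exact ⟨y, ⟨hy.1.1, Or.inr hy.1.2⟩, hy.2⟩
      · obtain ⟨x, hxW, _⟩ := hne
        have hnsub : ¬ (W ∩ D (i : ℕ) ⊆ E j) := by
          intro hsub
          apply hWB
          exact ⟨x, hxW, mem_iUnion.mpr ⟨i, ⟨W, ⟨hW, hsub⟩, hxW⟩⟩⟩
        obtain ⟨y, hyWD, hyE⟩ := not_subset.mp hnsub
        exact ⟨y, ⟨hyWD.1, Or.inl hyE⟩, hyWD.2⟩
    -- maximality gives S j open
    have hSopen : ∀ j, U₀.IsOpen (S j) := by
      intro j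
      have hexp : expandBy U₀ (S j) ∈ P := by
        constructor
        · exact fun V hV => expandBy_isOpen_of U₀ (S j) (hU₀P.1 V hV)
        · rintro i V ⟨W₁, W₂, hW₁, hW₂, rfl⟩ hVne
          by_cases h1 : W₁.Nonempty
          · obtain ⟨y, hy⟩ := hU₀dense i W₁ hW₁ h1
            exact ⟨y, Or.inl hy.1, hy.2⟩
          · have h2 : (W₂ ∩ S j).Nonempty := by
              rcases hVne with ⟨x, hx | hx⟩
              · exact absurd ⟨x, hx⟩ h1
              · exact ⟨x, hx⟩
            obtain ⟨y, hy⟩ := hgood j W₂ hW₂ h2 i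
            exact ⟨y, Or.inr hy.1, hy.2⟩
      have hMsub : M ⊆ {V | (expandBy U₀ (S j)).IsOpen V} := by
        intro V hV
        rw [← hU₀M] at hV
        exact expandBy_isOpen_of U₀ (S j) hV
      have := hMmax.2 ⟨expandBy U₀ (S j), hexp, rfl⟩ hMsub
      have hSmem : S j ∈ M := this (expandBy_isOpen_self U₀ (S j))
      rw [← hU₀M] at hSmem
      exact hSmem
    have hSE : ∀ (j : Fin (n + 1)) (x : X), x ∉ E j → x ∈ S j := fun j x hx => Or.inl hx
    have hSmeetsO : ∀ (j : Fin (n + 1)) (V : Set X), U₀.IsOpen V → (V ∩ S j).Nonempty →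
        ∃ i : Fin n, (V ∩ S j ∩ O j i).Nonempty := by
      intro j V hV hne
      obtain ⟨y, hy⟩ := hEdense j (V ∩ S j) (U₀.isOpen_inter _ _ hV (hSopen j)) hne
      have hyB : y ∈ B j := by
        rcases hy.1.2 with h | h
        · exact absurd hy.2 h
        · exact h
      obtain ⟨i, hi⟩ := mem_iUnion.mp hyB
      exact ⟨i, y, hy.1, hi⟩
    -- the inductive construction
    have key : ∀ k : ℕ, k ≤ n → ∃ (V : Set X) (J : Finset (Fin (n + 1)))
        (g : Fin (n + 1) → Fin n), U₀.IsOpen V ∧ V.Nonempty ∧ J.card = k ∧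
        Set.InjOn g J ∧ ∀ j ∈ J, V ⊆ O j (g j) := by
      intro k
      induction k with
      | zero =>
        exact fun _ => ⟨univ, ∅, fun _ => ⟨0, by omega⟩, U₀.isOpen_univ, univ_nonempty,
          rfl, by simp [Set.InjOn], by simp⟩
      | succ k ih =>
        intro hk
        obtain ⟨V, J, g, hVo, hVne, hcard, hinj, hsub⟩ := ih (by omega)
        obtain ⟨x, hx⟩ := hVne
        have hex : ∃ j, j ∉ J ∧ x ∉ E j := by
          by_contra h
          push_neg at h
          have hcc : 1 < Jᶜ.card := by
            rw [Finset.card_compl, hcard]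
            simp only [Fintype.card_fin]
            omega
          obtain ⟨j₁, hj₁, j₂, hj₂, hne12⟩ := Finset.one_lt_card.mp hcc
          have h1 := h j₁ (Finset.mem_compl.mp hj₁)
          have h2 := h j₂ (Finset.mem_compl.mp hj₂)
          exact (hEdisj hne12.symm).le_bot ⟨h2, h1⟩
        obtain ⟨j, hjJ, hjE⟩ := hex
        have hVS : (V ∩ S j).Nonempty := ⟨x, hx, hSE j x hjE⟩
        obtain ⟨i, hi⟩ := hSmeetsO j V hVo hVS
        have hiIm : ∀ j' ∈ J, g j' ≠ i := by
          intro j' hj' hgi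
          have hsub' : V ∩ S j ∩ O j i ⊆ O j' i ∩ O j i := by
            intro z hz
            exact ⟨by rw [← hgi]; exact hsub j' hj' hz.1.1, hz.2⟩
          rw [← Finset.mem_coe] at hj'
          obtain ⟨z, hz⟩ := hi
          have : z ∈ O j' i ∩ O j i := hsub' hz
          rw [hOdisj i j' j (by rintro rfl; exact hjJ hj')] at this
          exact this
        refine ⟨V ∩ S j ∩ O j i, insert j J, Function.update g j i,
          U₀.isOpen_inter _ _ (U₀.isOpen_inter _ _ hVo (hSopen j)) (hOopen j i), hi,
          by rw [Finset.card_insert_of_notMem hjJ, hcard], ?_, ?_⟩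
        · intro a ha b hb hab
          simp only [Finset.coe_insert, Set.mem_insert_iff, Finset.mem_coe] at ha hb
          rcases ha with rfl | ha <;> rcases hb with rfl | hb
          · rfl
          · rw [Function.update_self, Function.update_of_ne (by rintro rfl; exact hjJ hb)] at hab
            exact absurd hab.symm (hiIm b hb)
          · rw [Function.update_self, Function.update_of_ne (by rintro rfl; exact hjJ ha)] at hab
            exact absurd hab (hiIm a ha)
          · rw [Function.update_of_ne (by rintro rfl; exact hjJ ha),
              Function.update_of_ne (by rintro rfl; exact hjJ hb)] at hab
            exact hinj ha hb hab
        · intro j' hj'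
          rcases Finset.mem_insert.mp hj' with rfl | hjmem
          · rw [Function.update_self]
            exact fun z hz => hz.2
          · rw [Function.update_of_ne (by rintro rfl; exact hjJ hjmem)]
            exact fun z hz => hsub j' hjmem (hz.1.1)
    -- final contradiction
    obtain ⟨V, J, g, hVo, hVne, hcard, hinj, hsub⟩ := key n le_rfl
    have hJc : Jᶜ.card = 1 := by
      rw [Finset.card_compl, hcard]; simp
    obtain ⟨jh, hjh⟩ := Finset.card_pos.mp (by omega : 0 < Jᶜ.card)
    have hjhJ : jh ∉ J := Finset.mem_compl.mp hjh
    have hsurj : ∀ i : Fin n, ∃ j ∈ J, g j = i := by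
      have himg : J.image g = Finset.univ := by
        apply Finset.eq_univ_of_card
        rw [Finset.card_image_of_injOn hinj, hcard, Fintype.card_fin]
      intro i
      have : i ∈ J.image g := by rw [himg]; exact Finset.mem_univ i
      obtain ⟨j, hj, hgj⟩ := Finset.mem_image.mp this
      exact ⟨j, hj, hgj⟩
    by_cases hVS : (V ∩ S jh).Nonempty
    · obtain ⟨i, hi⟩ := hSmeetsO jh V hVo hVS
      obtain ⟨j, hjJ, hgj⟩ := hsurj i
      obtain ⟨z, hz⟩ := hi
      have hz1 : z ∈ O j i := by rw [← hgj]; exact hsub j hjJ hz.1.1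
      have : z ∈ O jh i ∩ O j i := ⟨hz.2, hz1⟩
      rw [hOdisj i jh j (by rintro rfl; exact hjhJ hjJ)] at this
      exact this
    · have hVE : V ⊆ E jh := by
        intro x hxV
        by_contra hxE
        exact hVS ⟨x, hxV, hSE jh x hxE⟩
      obtain ⟨j₀, hj₀⟩ := Finset.card_pos.mp (by omega : 0 < J.card)
      obtain ⟨y, hy⟩ := hEdense j₀ V hVo ⟨(hVne.choose), hVne.choose_spec⟩
      exact (hEdisj (by rintro rfl; exact hjhJ hj₀)).le_bot ⟨hy.2, hVE hy.1⟩
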